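/- Let (Ω, μ) be a probability space, let C₁, …, C_g be mutually independent random variables on Ω taking values in {0,1}, and let Y be a random variable on Ω taking values in a standard Borel space. Then the information loss from marginalizing group probabilities to bit probabilities satisfies I_g − I_b = (1/g)·Σ_{i=2}^{g} I(C_i ; (C₁,…,C_{i−1}) | Y) ≥ 0, where I_g := (1/g)·I(C₁,…,C_g ; Y) and I_b := (1/g)·Σ_{i=1}^{g} I(C_i ; Y). -/

import Mathlib

open MeasureTheory ProbabilityTheory Real

set_option linter.unusedSectionVars false
set_option maxHeartbeats 1000000


section AuxFinite
open Finset
section FinitePMF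

variable {S T U T' : Type*} [Fintype S] [Fintype T] [Fintype U] [Fintype T']

open Classical in
noncomputable def spush (p : S → ℝ) (f : S → T) : T → ℝ :=
  fun t => ∑ s, if f s = t then p s else 0

noncomputable def sH (p : S → ℝ) : ℝ := ∑ s, Real.negMulLog (p s)

open Classical in
noncomputable def scH (p : S → ℝ) (f : S → T) (g : S → U) : ℝ :=
  ∑ t, ∑ u, spush p f t *
    Real.negMulLog (spush p (fun s => (f s, g s)) (t, u) / spush p f t)

lemma spush_nonneg {p : S → ℝ} (hp : ∀ s, 0 ≤ p s) (f : S → T) (t : T) :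
    0 ≤ spush p f t := by
  classical
  refine Finset.sum_nonneg fun s _ => ?_
  split_ifs
  exacts [hp s, le_rfl]

lemma sum_spush (p : S → ℝ) (f : S → T) : ∑ t, spush p f t = ∑ s, p s := by
  classical
  unfold spush
  rw [Finset.sum_comm]
  refine Finset.sum_congr rfl fun s _ => ?_
  simp

lemma spush_mul_sum (p : S → ℝ) (f : S → T) (F : T → ℝ) :
    ∑ t, spush p f t * F t = ∑ s, p s * F (f s) := by
  classical
  unfold spush
  simp_rw [Finset.sum_mul, ite_mul, zero_mul]
  rw [Finset.sum_comm]
  refine Finset.sum_congr rfl fun s _ => ?_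
  simp

lemma spush_pair_fst (p : S → ℝ) (f : S → T) (g : S → U) (t : T) :
    ∑ u, spush p (fun s => (f s, g s)) (t, u) = spush p f t := by
  classical
  unfold spush
  rw [Finset.sum_comm]
  refine Finset.sum_congr rfl fun s _ => ?_
  simp_rw [Prod.mk.injEq]
  by_cases hf : f s = t
  · simp [hf]
  · simp [hf]

lemma spush_pair_snd (p : S → ℝ) (f : S → T) (g : S → U) (u : U) :
    ∑ t, spush p (fun s => (f s, g s)) (t, u) = spush p g u := by
  classical
  unfold spush
  rw [Finset.sum_comm]
  refine Finset.sum_congr rfl fun s _ => ?_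
  simp_rw [Prod.mk.injEq]
  by_cases hg : g s = u
  · simp [hg]
  · simp [hg]

lemma spush_pair_le {p : S → ℝ} (hp : ∀ s, 0 ≤ p s) (f : S → T) (g : S → U)
    (t : T) (u : U) : spush p (fun s => (f s, g s)) (t, u) ≤ spush p f t := by
  rw [← spush_pair_fst p f g t]
  exact Finset.single_le_sum (fun u' _ => spush_nonneg hp _ _) (mem_univ u)

lemma spush_le_sum {p : S → ℝ} (hp : ∀ s, 0 ≤ p s) (f : S → T) (t : T) :
    spush p f t ≤ ∑ s, p s := by
  rw [← sum_spush p f]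
  exact Finset.single_le_sum (f := fun t' => spush p f t')
    (fun t' _ => spush_nonneg hp f t') (mem_univ t)

lemma spush_comp (p : S → ℝ) (f : S → T) (e : T → T') :
    spush p (fun s => e (f s)) = spush (spush p f) e := by
  classical
  funext t'
  have step1 : spush (spush p f) e t'
      = ∑ t, ∑ s, if f s = t then (if e (f s) = t' then p s else 0) else 0 := by
    unfold spush
    refine Finset.sum_congr rfl fun t _ => ?_
    by_cases h : e t = t'
    · rw [if_pos h]
      refine Finset.sum_congr rfl fun s _ => ?_
      by_cases h2 : f s = t
      · rw [if_pos h2, if_pos h2, if_pos (h2 ▸ h)]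
      · rw [if_neg h2, if_neg h2]
    · rw [if_neg h]
      refine (Finset.sum_eq_zero fun s _ => ?_).symm
      by_cases h2 : f s = t
      · rw [if_pos h2, h2, if_neg h]
      · rw [if_neg h2]
  rw [step1, Finset.sum_comm]
  unfold spush
  refine Finset.sum_congr rfl fun s _ => ?_
  simp

lemma spush_id (p : S → ℝ) : spush p (fun s => s) = p := by
  classical
  funext t
  unfold spush
  simp

lemma sH_spush_inj (e : T → T') (he : Function.Injective e) (q : T → ℝ) :
    sH (spush q e) = sH q := by
  classical
  unfold sH
  rw [← Finset.sum_subset (Finset.subset_univ (Finset.univ.image e))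
    (fun t' _ ht' => ?_)]
  · rw [Finset.sum_image (fun a _ b _ h => he h)]
    refine Finset.sum_congr rfl fun t _ => ?_
    congr 1
    unfold spush
    rw [Finset.sum_eq_single t]
    · simp
    · intro t'' _ hne
      exact if_neg fun h => hne (he h)
    · intro h; exact absurd (mem_univ t) h
  · have h0 : spush q e t' = 0 := by
      unfold spush
      refine Finset.sum_eq_zero fun t _ => ?_
      refine if_neg fun h => ht' ?_
      exact Finset.mem_image.mpr ⟨t, mem_univ t, h⟩
    rw [h0, Real.negMulLog_zero]

lemma schain {p : S → ℝ} (hp : ∀ s, 0 ≤ p s) (f : S → T) (g : S → U) :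
    sH (spush p (fun s => (f s, g s))) = sH (spush p f) + scH p f g := by
  classical
  unfold sH scH
  rw [Fintype.sum_prod_type, ← Finset.sum_add_distrib]
  refine Finset.sum_congr rfl fun t _ => ?_
  by_cases h0 : spush p f t = 0
  · have hc : ∀ u, spush p (fun s => (f s, g s)) (t, u) = 0 := fun u =>
      le_antisymm (h0 ▸ spush_pair_le hp f g t u) (spush_nonneg hp _ _)
    simp [hc, h0]
  · have key : ∀ u, Real.negMulLog (spush p (fun s => (f s, g s)) (t, u))
        = (spush p (fun s => (f s, g s)) (t, u) / spush p f t) * Real.negMulLog (spush p f t)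
          + spush p f t * Real.negMulLog (spush p (fun s => (f s, g s)) (t, u) / spush p f t) := by
      intro u
      conv_lhs => rw [show spush p (fun s => (f s, g s)) (t, u)
        = spush p f t * (spush p (fun s => (f s, g s)) (t, u) / spush p f t) by
          field_simp]
      rw [Real.negMulLog_mul]
    simp_rw [key]
    rw [Finset.sum_add_distrib, ← Finset.sum_mul, ← Finset.sum_div,
      spush_pair_fst, div_self h0, one_mul]

lemma scH_le {p : S → ℝ} (hp : ∀ s, 0 ≤ p s) (htot : ∑ s, p s = 1)
    (f : S → T) (g : S → U) : scH p f g ≤ sH (spush p g) := by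
  classical
  unfold scH sH
  rw [Finset.sum_comm]
  refine Finset.sum_le_sum fun u _ => ?_
  have hga : spush p g u = ∑ t, spush p f t • (spush p (fun s => (f s, g s)) (t, u) / spush p f t) := by
    rw [← spush_pair_snd p f g u]
    refine Finset.sum_congr rfl fun t _ => ?_
    by_cases h0 : spush p f t = 0
    · have : spush p (fun s => (f s, g s)) (t, u) = 0 :=
        le_antisymm (h0 ▸ spush_pair_le hp f g t u) (spush_nonneg hp _ _)
      simp [this, h0]
    · rw [smul_eq_mul, mul_div_cancel₀ _ h0]
  rw [hga]
  have hJ := Real.concaveOn_negMulLog.le_map_sum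
    (t := Finset.univ) (w := fun t => spush p f t)
    (p := fun t => spush p (fun s => (f s, g s)) (t, u) / spush p f t)
    (fun t _ => spush_nonneg hp f t)
    (by rw [sum_spush]; exact htot)
    (fun t _ => div_nonneg (spush_nonneg hp _ _) (spush_nonneg hp f t))
  simpa [smul_eq_mul] using hJ

lemma scH_of_mul {p : S → ℝ} {f : S → T} {g : S → U}
    (hfact : ∀ t u, spush p (fun s => (f s, g s)) (t, u) = spush p f t * spush p g u)
    (htot : ∑ s, p s = 1) : scH p f g = sH (spush p g) := by
  classical
  unfold scH sH
  have key : ∀ t u, spush p f t *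
      Real.negMulLog (spush p (fun s => (f s, g s)) (t, u) / spush p f t)
      = spush p f t * Real.negMulLog (spush p g u) := by
    intro t u
    by_cases h0 : spush p f t = 0
    · simp [h0]
    · rw [hfact, mul_div_cancel_left₀ _ h0]
  simp_rw [key]
  rw [Finset.sum_comm]
  refine Finset.sum_congr rfl fun u _ => ?_
  rw [← Finset.sum_mul, sum_spush, htot, one_mul]

lemma scH_subsingleton [Subsingleton T] {p : S → ℝ} (f : S → T) (g : S → U)
    (htot : ∑ s, p s = 1) : scH p f g = sH (spush p g) := by
  classical
  refine scH_of_mul (fun t u => ?_) htot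
  have h1 : spush p f t = 1 := by
    unfold spush
    rw [← htot]
    exact Finset.sum_congr rfl fun s _ => if_pos (Subsingleton.elim _ _)
  rw [h1, one_mul]
  unfold spush
  refine Finset.sum_congr rfl fun s _ => ?_
  congr 1
  simp [Prod.ext_iff, Subsingleton.elim (f s) t]

end FinitePMF
section VectorChain

lemma sH_chain {n : ℕ} (p : (Fin n → Bool) → ℝ) (hp : ∀ v, 0 ≤ p v)
    (htot : ∑ v, p v = 1) :
    sH p = ∑ i : Fin n, scH p
      (fun v (j : Fin (i : ℕ)) => v (Fin.castLE i.isLt.le j)) (fun v => v i) := by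
  classical
  suffices h : ∀ k, ∀ hk : k ≤ n,
      sH (spush p (fun v (j : Fin k) => v (Fin.castLE hk j)))
        = ∑ i ∈ Finset.univ.filter (fun i : Fin n => (i : ℕ) < k),
            scH p (fun v (j : Fin (i : ℕ)) => v (Fin.castLE i.isLt.le j)) (fun v => v i) by
    have hfin := h n le_rfl
    rw [Finset.filter_true_of_mem (fun i _ => i.isLt)] at hfin
    have hid : (fun (v : Fin n → Bool) (j : Fin n) => v (Fin.castLE le_rfl j))
        = fun v => v := by
      funext v j
      exact congrArg v (Fin.ext rfl)
    rw [hid] at hfin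
    rw [show spush p (fun v => v) = p from spush_id p] at hfin
    exact hfin
  intro k
  induction k with
  | zero =>
    intro hk
    have h1 : ∀ t : Fin 0 → Bool,
        spush p (fun v (j : Fin 0) => v (Fin.castLE hk j)) t = 1 := by
      intro t
      unfold spush
      rw [← htot]
      exact Finset.sum_congr rfl fun v _ => if_pos (Subsingleton.elim _ _)
    have h2 : sH (spush p (fun v (j : Fin 0) => v (Fin.castLE hk j))) = 0 := by
      unfold sH
      refine Finset.sum_eq_zero fun t _ => ?_
      rw [h1 t, Real.negMulLog_one]
    rw [h2]
    rw [Finset.filter_false_of_mem (fun i _ => by simp)]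
    simp
  | succ k ih =>
    intro hk1
    have hk : k ≤ n := Nat.le_of_succ_le hk1
    have hkn : k < n := hk1
    set i₀ : Fin n := ⟨k, hkn⟩ with hi₀
    have he : Function.Injective
        (fun (w : Fin (k+1) → Bool) => ((fun j => w j.castSucc, w (Fin.last k)) :
          (Fin k → Bool) × Bool)) := by
      intro w w' hww
      have h1 := congrArg Prod.fst hww
      have h2 := congrArg Prod.snd hww
      funext j
      induction j using Fin.lastCases with
      | last => exact h2
      | cast j => exact congrFun h1 j
    have hcomp : (fun (v : Fin n → Bool) => (fun (w : Fin (k+1) → Bool) =>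
          ((fun j => w j.castSucc, w (Fin.last k)) : (Fin k → Bool) × Bool))
          ((fun (v : Fin n → Bool) (j : Fin (k+1)) => v (Fin.castLE hk1 j)) v))
        = fun (v : Fin n → Bool) => ((fun (j : Fin k) => v (Fin.castLE hk j)), v i₀) := by
      funext v
      refine Prod.ext ?_ ?_
      · funext j
        exact congrArg v (Fin.ext (by simp))
      · exact congrArg v (Fin.ext (by simp [hi₀]))
    have hstep : sH (spush p (fun v (j : Fin (k+1)) => v (Fin.castLE hk1 j)))
        = sH (spush p (fun v (j : Fin k) => v (Fin.castLE hk j)))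
          + scH p (fun v (j : Fin k) => v (Fin.castLE hk j)) (fun v => v i₀) := by
      rw [← sH_spush_inj _ he (spush p (fun v (j : Fin (k+1)) => v (Fin.castLE hk1 j))),
        ← spush_comp, hcomp]
      exact schain hp _ _
    have hfilter : Finset.univ.filter (fun i : Fin n => (i : ℕ) < k + 1)
        = insert i₀ (Finset.univ.filter (fun i : Fin n => (i : ℕ) < k)) := by
      ext j
      simp only [Finset.mem_filter, Finset.mem_univ, true_and, Finset.mem_insert]
      rw [Nat.lt_succ_iff_lt_or_eq, Fin.ext_iff, hi₀]
      tauto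
    rw [hstep, ih hk, hfilter, Finset.sum_insert (by simp [hi₀])]
    rw [add_comm]

end VectorChain
section Bounds

lemma abs_negMulLog_le_one {x : ℝ} (h0 : 0 ≤ x) (h1 : x ≤ 1) :
    |Real.negMulLog x| ≤ 1 := by
  rw [abs_of_nonneg (Real.negMulLog_nonneg h0 h1)]
  rcases eq_or_lt_of_le h0 with h | h
  · simp [← h]
  · have hlog := Real.log_le_sub_one_of_pos (inv_pos.mpr h)
    rw [Real.log_inv] at hlog
    have hinv : x * x⁻¹ = 1 := mul_inv_cancel₀ (ne_of_gt h)
    have : Real.negMulLog x = x * (-Real.log x) := by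
      rw [Real.negMulLog]; ring
    rw [this]
    nlinarith [h.le]

variable {S T U : Type*} [Fintype S] [Fintype T] [Fintype U]

lemma abs_sH_le {q : S → ℝ} (h0 : ∀ s, 0 ≤ q s) (h1 : ∀ s, q s ≤ 1) :
    |sH q| ≤ (Fintype.card S : ℝ) := by
  unfold sH
  calc |∑ s, Real.negMulLog (q s)| ≤ ∑ s, |Real.negMulLog (q s)| :=
        Finset.abs_sum_le_sum_abs _ _
    _ ≤ ∑ _s : S, (1 : ℝ) :=
        Finset.sum_le_sum fun s _ => abs_negMulLog_le_one (h0 s) (h1 s)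
    _ = (Fintype.card S : ℝ) := by simp

lemma abs_scH_le {p : S → ℝ} (hp : ∀ s, 0 ≤ p s) (htot : ∑ s, p s = 1)
    (f : S → T) (g : S → U) :
    |scH p f g| ≤ (Fintype.card T : ℝ) * (Fintype.card U : ℝ) := by
  unfold scH
  have hterm : ∀ t u, |spush p f t *
      Real.negMulLog (spush p (fun s => (f s, g s)) (t, u) / spush p f t)| ≤ 1 := by
    intro t u
    rw [abs_mul]
    have ha0 : 0 ≤ spush p f t := spush_nonneg hp f t
    have ha1 : spush p f t ≤ 1 := htot ▸ spush_le_sum hp f t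
    have hr0 : 0 ≤ spush p (fun s => (f s, g s)) (t, u) / spush p f t :=
      div_nonneg (spush_nonneg hp _ _) ha0
    have hr1 : spush p (fun s => (f s, g s)) (t, u) / spush p f t ≤ 1 := by
      rcases eq_or_lt_of_le ha0 with h | h
      · rw [← h, div_zero]; norm_num
      · exact div_le_one_of_le₀ (spush_pair_le hp f g t u) h.le
    calc |spush p f t| * |Real.negMulLog _| ≤ 1 * 1 := by
          refine mul_le_mul ?_ (abs_negMulLog_le_one hr0 hr1) (abs_nonneg _) zero_le_one
          rw [abs_of_nonneg ha0]; exact ha1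
      _ = 1 := by norm_num
  calc |∑ t, ∑ u, _| ≤ ∑ t, |∑ u, _| := Finset.abs_sum_le_sum_abs _ _
    _ ≤ ∑ t : T, ∑ u : U, (1:ℝ) := Finset.sum_le_sum fun t _ =>
        le_trans (Finset.abs_sum_le_sum_abs _ _)
          (Finset.sum_le_sum fun u _ => hterm t u)
    _ = (Fintype.card T : ℝ) * (Fintype.card U : ℝ) := by
        simp [mul_comm]

end Bounds

end AuxFinite

/-- Shannon entropy of a measure on a finite measurable space. -/
noncomputable def measEntropy {S : Type*} [Fintype S] [MeasurableSpace S]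
    (ν : Measure S) : ℝ :=
  - ∑ s : S, ((ν {s}).toReal * Real.log (ν {s}).toReal)

/-- Shannon entropy `H(X)` of a random variable with values in a finite set. -/
noncomputable def entropyRV {Ω : Type*} [MeasurableSpace Ω] (μ : Measure Ω)
    {S : Type*} [Fintype S] [MeasurableSpace S] (X : Ω → S) : ℝ :=
  measEntropy (μ.map X)

/-- Conditional Shannon entropy `H(X | Y)` of a finitely-valued random variable `X`
given a random variable `Y`, defined via the conditional distribution of `X` given `Y`. -/
noncomputable def condEntropyRV {Ω : Type*} [MeasurableSpace Ω] (μ : Measure Ω)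
    [IsFiniteMeasure μ]
    {S : Type*} [Fintype S] [MeasurableSpace S] [StandardBorelSpace S] [Nonempty S]
    {β : Type*} [MeasurableSpace β] (X : Ω → S) (Y : Ω → β) : ℝ :=
  ∫ y, measEntropy (condDistrib X Y μ y) ∂(μ.map Y)

/-- Mutual information `I(X ; Y) = H(X) - H(X | Y)`. -/
noncomputable def mutualInfoRV {Ω : Type*} [MeasurableSpace Ω] (μ : Measure Ω)
    [IsFiniteMeasure μ]
    {S : Type*} [Fintype S] [MeasurableSpace S] [StandardBorelSpace S] [Nonempty S]
    {β : Type*} [MeasurableSpace β] (X : Ω → S) (Y : Ω → β) : ℝ :=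
  entropyRV μ X - condEntropyRV μ X Y

/-- Conditional mutual information `I(X ; W | Y) = H(X | Y) - H(X | (W, Y))`. -/
noncomputable def condMutualInfoRV {Ω : Type*} [MeasurableSpace Ω] (μ : Measure Ω)
    [IsFiniteMeasure μ]
    {S : Type*} [Fintype S] [MeasurableSpace S] [StandardBorelSpace S] [Nonempty S]
    {T : Type*} [MeasurableSpace T]
    {β : Type*} [MeasurableSpace β] (X : Ω → S) (W : Ω → T) (Y : Ω → β) : ℝ :=
  condEntropyRV μ X Y - condEntropyRV μ X (fun ω => (W ω, Y ω))

section AuxMeasure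

open Finset
open scoped ENNReal

lemma measEntropy_eq_sH {S : Type*} [Fintype S] [MeasurableSpace S] (ρ : Measure S) :
    measEntropy ρ = sH (fun s => (ρ {s}).toReal) := by
  unfold measEntropy sH
  rw [← Finset.sum_neg_distrib]
  refine Finset.sum_congr rfl fun s _ => ?_
  rw [Real.negMulLog]
  ring

open Classical in
lemma measure_toReal_eq_sum {S : Type*} [Fintype S] [MeasurableSpace S]
    [MeasurableSingletonClass S] (ρ : Measure S) [IsFiniteMeasure ρ] (A : Set S) :
    (ρ A).toReal = ∑ s, if s ∈ A then (ρ {s}).toReal else 0 := by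
  classical
  have hA : ρ A = ∑ s ∈ Finset.univ.filter (· ∈ A), ρ {s} := by
    conv_lhs => rw [show A = ⋃ s ∈ Finset.univ.filter (· ∈ A), ({s} : Set S) by
      ext x; simp]
    rw [measure_biUnion_finset ?_ (fun _ _ => measurableSet_singleton _)]
    intro x _ y _ hxy
    exact Set.disjoint_singleton.mpr hxy
  rw [hA, ENNReal.toReal_sum (fun s _ => measure_ne_top ρ _), Finset.sum_filter]

lemma sum_measure_toReal_univ {S : Type*} [Fintype S] [MeasurableSpace S]
    [MeasurableSingletonClass S] (ρ : Measure S) [IsFiniteMeasure ρ] :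
    ∑ s, (ρ {s}).toReal = (ρ Set.univ).toReal := by
  rw [measure_toReal_eq_sum ρ Set.univ]
  simp

lemma measure_ext_prod_right {γ S : Type*} [MeasurableSpace γ] [Fintype S]
    [MeasurableSpace S] [MeasurableSingletonClass S] {ρ₁ ρ₂ : Measure (γ × S)}
    (h : ∀ A : Set γ, MeasurableSet A → ∀ s : S, ρ₁ (A ×ˢ {s}) = ρ₂ (A ×ˢ {s})) :
    ρ₁ = ρ₂ := by
  ext E hE
  have hdecomp : E = ⋃ s : S, ((fun x => (x, s)) ⁻¹' E) ×ˢ ({s} : Set S) := by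
    ext ⟨x, b⟩
    simp only [Set.mem_iUnion, Set.mem_prod, Set.mem_preimage, Set.mem_singleton_iff]
    constructor
    · intro hx; exact ⟨b, hx, rfl⟩
    · rintro ⟨s, hs, rfl⟩; exact hs
  have hm : ∀ s : S, MeasurableSet (((fun x => (x, s)) ⁻¹' E) ×ˢ ({s} : Set S)) :=
    fun s => (measurable_prodMk_right hE).prod (measurableSet_singleton s)
  have hd : Pairwise (Function.onFun Disjoint
      fun s : S => ((fun x => (x, s)) ⁻¹' E) ×ˢ ({s} : Set S)) := by
    intro s s' hss'
    refine Set.disjoint_left.mpr ?_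
    rintro ⟨x, b⟩ ⟨_, h1⟩ ⟨_, h2⟩
    simp only [Set.mem_singleton_iff] at h1 h2
    exact hss' (h1.symm.trans h2)
  rw [hdecomp, measure_iUnion hd hm, measure_iUnion hd hm]
  exact tsum_congr fun s => h _ (measurable_prodMk_right hE) s

lemma measure_ext_prod_left {T γ : Type*} [MeasurableSpace γ] [Fintype T]
    [MeasurableSpace T] [MeasurableSingletonClass T] {ρ₁ ρ₂ : Measure (T × γ)}
    (h : ∀ t : T, ∀ B : Set γ, MeasurableSet B → ρ₁ ({t} ×ˢ B) = ρ₂ ({t} ×ˢ B)) :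
    ρ₁ = ρ₂ := by
  ext E hE
  have hdecomp : E = ⋃ t : T, ({t} : Set T) ×ˢ (Prod.mk t ⁻¹' E) := by
    ext ⟨t, x⟩
    simp only [Set.mem_iUnion, Set.mem_prod, Set.mem_preimage, Set.mem_singleton_iff]
    constructor
    · intro hx; exact ⟨t, rfl, hx⟩
    · rintro ⟨s, rfl, hs⟩; exact hs
  have hm : ∀ t : T, MeasurableSet (({t} : Set T) ×ˢ (Prod.mk t ⁻¹' E)) :=
    fun t => (measurableSet_singleton t).prod (measurable_prodMk_left hE)
  have hd : Pairwise (Function.onFun Disjoint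
      fun t : T => ({t} : Set T) ×ˢ (Prod.mk t ⁻¹' E)) := by
    intro t t' htt'
    refine Set.disjoint_left.mpr ?_
    rintro ⟨a, x⟩ ⟨h1, _⟩ ⟨h2, _⟩
    simp only [Set.mem_singleton_iff] at h1 h2
    exact htt' (h1.symm.trans h2)
  rw [hdecomp, measure_iUnion hd hm, measure_iUnion hd hm]
  exact tsum_congr fun t => h t _ (measurable_prodMk_left hE)

noncomputable def bKer {α : Type*} [MeasurableSpace α] (c : α → Bool → ℝ≥0∞)
    (hc : ∀ b, Measurable fun a => c a b) : Kernel α Bool where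
  toFun a := c a true • Measure.dirac true + c a false • Measure.dirac false
  measurable' := by
    refine Measure.measurable_of_measurable_coe _ fun s hs => ?_
    simp only [Measure.coe_add, Measure.coe_smul, Pi.add_apply, Pi.smul_apply,
      smul_eq_mul]
    exact ((hc true).mul_const _).add ((hc false).mul_const _)

lemma bKer_apply_singleton {α : Type*} [MeasurableSpace α] (c : α → Bool → ℝ≥0∞)
    (hc : ∀ b, Measurable fun a => c a b) (a : α) (b : Bool) :
    bKer c hc a {b} = c a b := by
  have : bKer c hc a = c a true • Measure.dirac true + c a false • Measure.dirac false := rfl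
  rw [this]
  cases b <;>
    simp [Measure.dirac_apply]

lemma bKer_isFiniteKernel {α : Type*} [MeasurableSpace α] (c : α → Bool → ℝ≥0∞)
    (hc : ∀ b, Measurable fun a => c a b) (hle : ∀ a b, c a b ≤ 1) :
    IsFiniteKernel (bKer c hc) := by
  refine ⟨⟨2, ENNReal.ofNat_lt_top, fun a => ?_⟩⟩
  have : bKer c hc a = c a true • Measure.dirac true + c a false • Measure.dirac false := rfl
  rw [this]
  simp only [Measure.coe_add, Measure.coe_smul, Pi.add_apply, Pi.smul_apply,
    smul_eq_mul]
  calc c a true * Measure.dirac true Set.univ + c a false * Measure.dirac false Set.univ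
      ≤ 1 * 1 + 1 * 1 := by
        gcongr <;> first | exact hle a _ | simp
    _ = 2 := by norm_num

lemma condEntropyRV_eq_of_compProd {Ω' β' : Type*} [MeasurableSpace Ω']
    (μ' : Measure Ω') [IsFiniteMeasure μ'] {S : Type*} [Fintype S] [MeasurableSpace S]
    [StandardBorelSpace S] [Nonempty S] [MeasurableSpace β'] (X : Ω' → S) (W : Ω' → β')
    (hX : Measurable X) (hW : Measurable W) (η : Kernel β' S) [IsFiniteKernel η]
    (h : μ'.map (fun ω => (W ω, X ω)) = (μ'.map W) ⊗ₘ η) :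
    condEntropyRV μ' X W = ∫ x, measEntropy (η x) ∂(μ'.map W) := by
  have hae := condDistrib_ae_eq_of_measure_eq_compProd W hX.aemeasurable (κ := η) h
  unfold condEntropyRV
  refine integral_congr_ae ?_
  filter_upwards [hae] with x hx
  rw [hx]

lemma integrable_of_bound {α : Type*} [MeasurableSpace α] (μ : Measure α)
    [IsFiniteMeasure μ] (f : α → ℝ) (hf : Measurable f) (c : ℝ)
    (h : ∀ x, |f x| ≤ c) : Integrable f μ :=
  (integrable_const c).mono' hf.aestronglyMeasurable (ae_of_all _ fun x => by
    simpa [Real.norm_eq_abs] using h x)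

end AuxMeasure

section Bridge

open Finset
open scoped ENNReal

variable {Ω : Type*} [MeasurableSpace Ω] (μ : Measure Ω) [IsProbabilityMeasure μ]
  {β : Type*} [MeasurableSpace β] {g : ℕ}
  (C : Fin g → Ω → Bool) (Y : Ω → β)
  (κ : Kernel β (Fin g → Bool)) [IsMarkovKernel κ]

lemma aux_P1 (hC : ∀ i, Measurable (C i)) (hY : Measurable Y)
    (hbase : μ.map (fun ω => (Y ω, (fun i => C i ω : Fin g → Bool))) = (μ.map Y) ⊗ₘ κ)
    {B : Set β} (hB : MeasurableSet B) (A : Set (Fin g → Bool)) :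
    μ (Y ⁻¹' B ∩ (fun ω => (fun i => C i ω : Fin g → Bool)) ⁻¹' A)
      = ∫⁻ y in B, κ y A ∂(μ.map Y) := by
  have hVm : Measurable (fun ω => (fun i => C i ω : Fin g → Bool)) :=
    measurable_pi_lambda _ fun i => hC i
  have hA : MeasurableSet A := A.toFinite.measurableSet
  have h1 : μ (Y ⁻¹' B ∩ (fun ω => (fun i => C i ω : Fin g → Bool)) ⁻¹' A)
      = μ.map (fun ω => (Y ω, (fun i => C i ω : Fin g → Bool))) (B ×ˢ A) := by
    rw [Measure.map_apply (hY.prodMk hVm) (hB.prod hA), Set.mk_preimage_prod]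
  rw [h1, hbase, Measure.compProd_apply_prod hB hA]

lemma aux_P2 (hC : ∀ i, Measurable (C i)) (hY : Measurable Y)
    (hbase : μ.map (fun ω => (Y ω, (fun i => C i ω : Fin g → Bool))) = (μ.map Y) ⊗ₘ κ)
    {B : Set β} (hB : MeasurableSet B) (A : Set (Fin g → Bool))
    {h : β → ℝ≥0∞} (hh : Measurable h) :
    ∫⁻ ω, (Y ⁻¹' B ∩ (fun ω => (fun i => C i ω : Fin g → Bool)) ⁻¹' A).indicator
        (fun ω => h (Y ω)) ω ∂μ
      = ∫⁻ y in B, h y * κ y A ∂(μ.map Y) := by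
  have hVm : Measurable (fun ω => (fun i => C i ω : Fin g → Bool)) :=
    measurable_pi_lambda _ fun i => hC i
  have hA : MeasurableSet A := A.toFinite.measurableSet
  have hmeasind : Measurable ((B ×ˢ A).indicator
      (fun p : β × (Fin g → Bool) => h p.1)) :=
    (hh.comp measurable_fst).indicator (hB.prod hA)
  have hind : ∀ ω, (B ×ˢ A).indicator (fun p : β × (Fin g → Bool) => h p.1)
      ((Y ω, (fun i => C i ω : Fin g → Bool)))
      = (Y ⁻¹' B ∩ (fun ω => (fun i => C i ω : Fin g → Bool)) ⁻¹' A).indicator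
          (fun ω => h (Y ω)) ω := by
    intro ω
    classical
    rw [Set.indicator_apply, Set.indicator_apply]
    exact if_congr Iff.rfl rfl rfl
  calc ∫⁻ ω, (Y ⁻¹' B ∩ (fun ω => (fun i => C i ω : Fin g → Bool)) ⁻¹' A).indicator
        (fun ω => h (Y ω)) ω ∂μ
      = ∫⁻ ω, (B ×ˢ A).indicator (fun p : β × (Fin g → Bool) => h p.1)
          ((Y ω, (fun i => C i ω : Fin g → Bool))) ∂μ :=
        lintegral_congr fun ω => (hind ω).symm
    _ = ∫⁻ p, (B ×ˢ A).indicator (fun p : β × (Fin g → Bool) => h p.1) p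
          ∂(μ.map (fun ω => (Y ω, (fun i => C i ω : Fin g → Bool)))) :=
        (lintegral_map hmeasind (hY.prodMk hVm)).symm
    _ = ∫⁻ y, ∫⁻ v, (B ×ˢ A).indicator (fun p : β × (Fin g → Bool) => h p.1) (y, v)
          ∂κ y ∂(μ.map Y) := by
        rw [hbase, Measure.lintegral_compProd hmeasind]
    _ = ∫⁻ y, B.indicator (fun y => h y * κ y A) y ∂(μ.map Y) := by
        refine lintegral_congr fun y => ?_
        by_cases hy : y ∈ B
        · rw [Set.indicator_of_mem hy]
          have hv : ∀ v, (B ×ˢ A).indicator (fun p : β × (Fin g → Bool) => h p.1) (y, v)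
              = A.indicator (fun _ => h y) v := by
            intro v
            by_cases hvA : v ∈ A
            · rw [Set.indicator_of_mem (Set.mk_mem_prod hy hvA), Set.indicator_of_mem hvA]
            · rw [Set.indicator_of_notMem (fun hm => hvA hm.2),
                Set.indicator_of_notMem hvA]
          rw [lintegral_congr hv, lintegral_indicator hA, setLIntegral_const]
        · rw [Set.indicator_of_notMem hy]
          have hv : ∀ v, (B ×ˢ A).indicator (fun p : β × (Fin g → Bool) => h p.1) (y, v)
              = 0 := fun v => Set.indicator_of_notMem (fun hm => hy hm.1) _
          rw [lintegral_congr hv, lintegral_zero]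
    _ = ∫⁻ y in B, h y * κ y A ∂(μ.map Y) := by
        rw [lintegral_indicator hB]

end Bridge

section Bridge2

open Finset
open scoped ENNReal

open Classical in
lemma measure_preimage_toReal_eq_spush {S T' : Type*} [Fintype S] [MeasurableSpace S]
    [MeasurableSingletonClass S] (ρ : Measure S) [IsFiniteMeasure ρ]
    (f : S → T') (t : T') :
    (ρ (f ⁻¹' {t})).toReal = spush (fun s => (ρ {s}).toReal) f t := by
  rw [measure_toReal_eq_sum]
  unfold spush
  exact Finset.sum_congr rfl fun s _ => if_congr (by simp) rfl rfl

open Classical in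
lemma measure_preimage2_toReal_eq_spush {S T' U' : Type*} [Fintype S] [MeasurableSpace S]
    [MeasurableSingletonClass S] (ρ : Measure S) [IsFiniteMeasure ρ]
    (f : S → T') (gg : S → U') (t : T') (u : U') :
    (ρ (f ⁻¹' {t} ∩ gg ⁻¹' {u})).toReal
      = spush (fun s => (ρ {s}).toReal) (fun s => (f s, gg s)) (t, u) := by
  rw [measure_toReal_eq_sum]
  unfold spush
  refine Finset.sum_congr rfl fun s _ => ?_
  by_cases h : (f s, gg s) = (t, u)
  · have h' : f s = t ∧ gg s = u := by simpa [Prod.ext_iff] using h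
    have hmem : s ∈ f ⁻¹' {t} ∩ gg ⁻¹' {u} := ⟨h'.1, h'.2⟩
    rw [if_pos hmem, if_pos h]
  · have h' : ¬ (s ∈ f ⁻¹' {t} ∩ gg ⁻¹' {u}) := fun hm => h (by
      simp only [Set.mem_inter_iff, Set.mem_preimage, Set.mem_singleton_iff] at hm
      simp [Prod.ext_iff, hm.1, hm.2])
    rw [if_neg h', if_neg h]

variable {Ω : Type*} [MeasurableSpace Ω] (μ : Measure Ω) [IsProbabilityMeasure μ]
  {g : ℕ} (C : Fin g → Ω → Bool)

lemma aux_indep (hindep : iIndepFun C μ) (i : Fin g)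
    (t : Fin (i : ℕ) → Bool) (b : Bool) :
    μ {ω | (∀ j : Fin (i : ℕ), C (Fin.castLE i.isLt.le j) ω = t j) ∧ C i ω = b}
      = μ {ω | ∀ j : Fin (i : ℕ), C (Fin.castLE i.isLt.le j) ω = t j}
        * μ {ω | C i ω = b} := by
  classical
  set Jlt : Finset (Fin g) := Finset.univ.filter (fun j => (j : ℕ) < (i : ℕ)) with hJlt
  set sfun : Fin g → Set Bool :=
    fun j => if h : (j : ℕ) < (i : ℕ) then {t ⟨(j : ℕ), h⟩} else {b} with hsfun
  have hiJ : i ∉ Jlt := by simp [hJlt]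
  have hforall : ∀ ω, (∀ j : Fin (i : ℕ), C (Fin.castLE i.isLt.le j) ω = t j)
      ↔ ∀ j ∈ Jlt, C j ω ∈ sfun j := by
    intro ω
    constructor
    · intro h1 j hj
      have hj' : (j : ℕ) < (i : ℕ) := by simpa [hJlt] using hj
      have := h1 ⟨(j : ℕ), hj'⟩
      rw [show Fin.castLE i.isLt.le ⟨(j : ℕ), hj'⟩ = j from Fin.ext rfl] at this
      rw [hsfun]
      simp only
      rw [dif_pos hj']
      simpa using this
    · intro hall j
      have hj : ((Fin.castLE i.isLt.le j : Fin g) : ℕ) < (i : ℕ) := j.isLt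
      have h := hall (Fin.castLE i.isLt.le j)
        (Finset.mem_filter.mpr ⟨Finset.mem_univ _, hj⟩)
      rw [hsfun] at h
      simp only at h
      rw [dif_pos hj] at h
      simp only [Set.mem_singleton_iff] at h
      rw [h]
      exact congrArg t (Fin.ext rfl)
  have hset1 : {ω | (∀ j : Fin (i : ℕ), C (Fin.castLE i.isLt.le j) ω = t j) ∧ C i ω = b}
      = ⋂ j ∈ insert i Jlt, C j ⁻¹' sfun j := by
    ext ω
    simp only [Set.mem_setOf_eq, Set.mem_iInter, Set.mem_preimage, Finset.mem_insert]
    rw [hforall ω]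
    constructor
    · rintro ⟨h1, h2⟩ j hj
      rcases hj with rfl | hj
      · rw [hsfun]; simp only; rw [dif_neg (lt_irrefl _)]; exact h2
      · exact h1 j hj
    · intro hall
      refine ⟨fun j hj => hall j (Or.inr hj), ?_⟩
      have h := hall i (Or.inl rfl)
      rw [hsfun] at h
      simp only at h
      rw [dif_neg (lt_irrefl _)] at h
      simpa using h
  have hset2 : {ω | ∀ j : Fin (i : ℕ), C (Fin.castLE i.isLt.le j) ω = t j}
      = ⋂ j ∈ Jlt, C j ⁻¹' sfun j := by
    ext ω
    simp only [Set.mem_setOf_eq, Set.mem_iInter, Set.mem_preimage]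
    exact hforall ω
  have hmeas : ∀ j, MeasurableSet[(inferInstance : MeasurableSpace Bool).comap (C j)]
      (C j ⁻¹' sfun j) := fun j => ⟨sfun j, (sfun j).toFinite.measurableSet, rfl⟩
  have h1 := hindep.meas_biInter (S := insert i Jlt)
    (s := fun j => C j ⁻¹' sfun j) (fun j _ => hmeas j)
  have h2 := hindep.meas_biInter (S := Jlt)
    (s := fun j => C j ⁻¹' sfun j) (fun j _ => hmeas j)
  have hci : C i ⁻¹' sfun i = C i ⁻¹' {b} := by
    rw [hsfun]; simp only; rw [dif_neg (lt_irrefl _)]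
  rw [hset1, hset2, h1, h2, Finset.prod_insert hiJ]
  rw [hci, mul_comm]
  rfl

end Bridge2

section Bridge3

open Finset
open scoped ENNReal

variable {Ω : Type*} [MeasurableSpace Ω] (μ : Measure Ω) [IsProbabilityMeasure μ]
  {β : Type*} [MeasurableSpace β] {g : ℕ}
  (C : Fin g → Ω → Bool) (Y : Ω → β)
  (κ : Kernel β (Fin g → Bool)) [IsMarkovKernel κ]

lemma aux_M2 (hC : ∀ i, Measurable (C i)) (hY : Measurable Y)
    (hbase : μ.map (fun ω => (Y ω, (fun i => C i ω : Fin g → Bool))) = (μ.map Y) ⊗ₘ κ)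
    (i : Fin g) :
    condEntropyRV μ (C i) Y
      = ∫ y, sH (spush (fun v => (κ y {v}).toReal) (fun v => v i)) ∂(μ.map Y) := by
  classical
  set c2 : β → Bool → ℝ≥0∞ := fun y b => κ y ((fun v : Fin g → Bool => v i) ⁻¹' {b})
    with hc2def
  have hc2 : ∀ b, Measurable fun y => c2 y b := fun b =>
    Kernel.measurable_coe κ (Set.toFinite _).measurableSet
  haveI : IsFiniteKernel (bKer c2 hc2) :=
    bKer_isFiniteKernel c2 hc2 (fun y b => prob_le_one)
  have h₂ : μ.map (fun ω => (Y ω, C i ω)) = (μ.map Y) ⊗ₘ bKer c2 hc2 := by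
    refine measure_ext_prod_right fun A hA b => ?_
    rw [Measure.map_apply (hY.prodMk (hC i)) (hA.prod (measurableSet_singleton b)),
      Set.mk_preimage_prod]
    have hps : C i ⁻¹' {b}
        = (fun ω => (fun i' => C i' ω : Fin g → Bool)) ⁻¹'
            ((fun v : Fin g → Bool => v i) ⁻¹' {b}) := rfl
    rw [hps, aux_P1 μ C Y κ hC hY hbase hA _,
      Measure.compProd_apply_prod hA (measurableSet_singleton b)]
    exact (lintegral_congr fun y => bKer_apply_singleton c2 hc2 y b).symm
  rw [condEntropyRV_eq_of_compProd μ (C i) Y (hC i) hY (bKer c2 hc2) h₂]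
  refine integral_congr_ae (ae_of_all _ fun y => ?_)
  show measEntropy (bKer c2 hc2 y)
      = sH (spush (fun v => (κ y {v}).toReal) (fun v => v i))
  rw [measEntropy_eq_sH]
  unfold sH
  refine Finset.sum_congr rfl fun b _ => ?_
  show Real.negMulLog ((bKer c2 hc2 y {b}).toReal) = _
  rw [bKer_apply_singleton]
  exact congrArg Real.negMulLog (measure_preimage_toReal_eq_spush (κ y) _ b)

lemma aux_M3 (hC : ∀ i, Measurable (C i)) (hY : Measurable Y)
    (hbase : μ.map (fun ω => (Y ω, (fun i => C i ω : Fin g → Bool))) = (μ.map Y) ⊗ₘ κ)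
    (i : Fin g) :
    condEntropyRV μ (C i)
        (fun ω => ((fun j : Fin (i : ℕ) => C (Fin.castLE i.isLt.le j) ω), Y ω))
      = ∫ y, scH (fun v => (κ y {v}).toReal)
          (fun v (j : Fin (i : ℕ)) => v (Fin.castLE i.isLt.le j))
          (fun v => v i) ∂(μ.map Y) := by
  classical
  have hVm : Measurable (fun ω => (fun i' => C i' ω : Fin g → Bool)) :=
    measurable_pi_lambda _ fun i' => hC i'
  set pri : (Fin g → Bool) → (Fin (i : ℕ) → Bool) :=
    fun v (j : Fin (i : ℕ)) => v (Fin.castLE i.isLt.le j) with hpridef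
  have hprim : Measurable pri := measurable_pi_lambda _ fun j => measurable_pi_apply _
  set W : Ω → (Fin (i : ℕ) → Bool) × β :=
    fun ω => ((fun j : Fin (i : ℕ) => C (Fin.castLE i.isLt.le j) ω), Y ω) with hWdef
  have hW : Measurable W := (measurable_pi_lambda _ fun j => hC _).prodMk hY
  set c3 : ((Fin (i : ℕ) → Bool) × β) → Bool → ℝ≥0∞ := fun x b =>
    κ x.2 (pri ⁻¹' {x.1} ∩ (fun v : Fin g → Bool => v i) ⁻¹' {b})
      / κ x.2 (pri ⁻¹' {x.1}) with hc3def
  have hc3 : ∀ b, Measurable fun x => c3 x b := by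
    intro b
    have hrw : (fun x : (Fin (i : ℕ) → Bool) × β => c3 x b)
        = (fun q : β × (Fin (i : ℕ) → Bool) =>
            κ q.1 (pri ⁻¹' {q.2} ∩ (fun v : Fin g → Bool => v i) ⁻¹' {b})
              / κ q.1 (pri ⁻¹' {q.2})) ∘ Prod.swap := rfl
    rw [hrw]
    refine Measurable.comp ?_ measurable_swap
    refine measurable_from_prod_countable_left fun t => ?_
    exact (Kernel.measurable_coe κ
        ((pri ⁻¹' {t} ∩ (fun v : Fin g → Bool => v i) ⁻¹' {b}).toFinite.measurableSet)).div
      (Kernel.measurable_coe κ ((pri ⁻¹' {t}).toFinite.measurableSet))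
  have hc3le : ∀ x b, c3 x b ≤ 1 := fun x b =>
    le_trans (ENNReal.div_le_div_right (measure_mono Set.inter_subset_left) _)
      ENNReal.div_self_le_one
  haveI : IsFiniteKernel (bKer c3 hc3) := bKer_isFiniteKernel c3 hc3 hc3le
  have h₃ : μ.map (fun ω => (W ω, C i ω)) = (μ.map W) ⊗ₘ bKer c3 hc3 := by
    refine measure_ext_prod_right fun A hA b => ?_
    rw [Measure.map_apply (hW.prodMk (hC i)) (hA.prod (measurableSet_singleton b)),
      Set.mk_preimage_prod,
      Measure.compProd_apply_prod hA (measurableSet_singleton b)]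
    have hη : ∫⁻ x in A, (bKer c3 hc3) x {b} ∂(μ.map W)
        = ∫⁻ x in A, c3 x b ∂(μ.map W) :=
      lintegral_congr fun x => bKer_apply_singleton c3 hc3 x b
    rw [hη, ← withDensity_apply _ hA]
    have hrestrict : μ (W ⁻¹' A ∩ C i ⁻¹' {b})
        = ((μ.restrict (C i ⁻¹' {b})).map W) A := by
      rw [Measure.map_apply hW hA, Measure.restrict_apply (hW hA)]
    rw [hrestrict]
    congr 1
    refine measure_ext_prod_left fun t B hB => ?_
    rw [Measure.map_apply hW ((measurableSet_singleton t).prod hB),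
      Measure.restrict_apply (hW ((measurableSet_singleton t).prod hB))]
    have hset : W ⁻¹' (({t} : Set (Fin (i : ℕ) → Bool)) ×ˢ B) ∩ C i ⁻¹' {b}
        = Y ⁻¹' B ∩ (fun ω => (fun i' => C i' ω : Fin g → Bool)) ⁻¹'
            (pri ⁻¹' {t} ∩ (fun v : Fin g → Bool => v i) ⁻¹' {b}) := by
      ext ω
      simp only [Set.mem_inter_iff, Set.mem_preimage, Set.mem_prod,
        Set.mem_singleton_iff]
      constructor
      · rintro ⟨⟨h1, h2⟩, h3⟩; exact ⟨h2, h1, h3⟩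
      · rintro ⟨h1, h2, h3⟩; exact ⟨⟨h2, h1⟩, h3⟩
    rw [hset, aux_P1 μ C Y κ hC hY hbase hB _]
    rw [withDensity_apply _ ((measurableSet_singleton t).prod hB)]
    have hsect : Measurable fun y => c3 (t, y) b :=
      (hc3 b).comp (measurable_prodMk_left)
    have h5 : ∫⁻ x in (({t} : Set (Fin (i : ℕ) → Bool)) ×ˢ B), c3 x b ∂(μ.map W)
        = ∫⁻ ω, (Y ⁻¹' B ∩ (fun ω => (fun i' => C i' ω : Fin g → Bool)) ⁻¹'
            (pri ⁻¹' {t})).indicator (fun ω => c3 (t, Y ω) b) ω ∂μ := by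
      rw [← lintegral_indicator ((measurableSet_singleton t).prod hB),
        lintegral_map ((hc3 b).indicator ((measurableSet_singleton t).prod hB)) hW]
      refine lintegral_congr fun ω => ?_
      by_cases hω : pri (fun i' => C i' ω) = t ∧ Y ω ∈ B
      · have hmem1 : W ω ∈ ({t} : Set (Fin (i : ℕ) → Bool)) ×ˢ B := ⟨hω.1, hω.2⟩
        have hmem2 : ω ∈ Y ⁻¹' B ∩ (fun ω => (fun i' => C i' ω : Fin g → Bool)) ⁻¹'
            (pri ⁻¹' {t}) := ⟨hω.2, hω.1⟩
        rw [Set.indicator_of_mem hmem1, Set.indicator_of_mem hmem2]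
        show c3 (pri (fun i' => C i' ω), Y ω) b = c3 (t, Y ω) b
        rw [hω.1]
      · have hmem1 : W ω ∉ ({t} : Set (Fin (i : ℕ) → Bool)) ×ˢ B :=
          fun hm => hω ⟨hm.1, hm.2⟩
        have hmem2 : ω ∉ Y ⁻¹' B ∩ (fun ω => (fun i' => C i' ω : Fin g → Bool)) ⁻¹'
            (pri ⁻¹' {t}) := fun hm => hω ⟨hm.2, hm.1⟩
        rw [Set.indicator_of_notMem hmem1, Set.indicator_of_notMem hmem2]
    rw [h5, aux_P2 μ C Y κ hC hY hbase hB _ hsect]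
    refine lintegral_congr fun y => ?_
    by_cases h0 : κ y (pri ⁻¹' {t}) = 0
    · have hz : κ y (pri ⁻¹' {t} ∩ (fun v : Fin g → Bool => v i) ⁻¹' {b}) = 0 :=
        le_antisymm (h0 ▸ measure_mono Set.inter_subset_left) zero_le
      rw [hz]
      have : c3 (t, y) b = 0 := by
        rw [hc3def]
        simp only
        rw [show κ y (pri ⁻¹' {t} ∩ (fun v : Fin g → Bool => v i) ⁻¹' {b}) = 0 from hz]
        simp
      rw [this, zero_mul]
    · exact (ENNReal.div_mul_cancel h0 (measure_ne_top _ _)).symm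
  rw [condEntropyRV_eq_of_compProd μ (C i) W (hC i) hW (bKer c3 hc3) h₃]
  have hGb : ∀ x, measEntropy (bKer c3 hc3 x) = ∑ b, Real.negMulLog ((c3 x b).toReal) := by
    intro x
    rw [measEntropy_eq_sH]
    unfold sH
    refine Finset.sum_congr rfl fun b _ => ?_
    show Real.negMulLog ((bKer c3 hc3 x {b}).toReal) = _
    rw [bKer_apply_singleton]
  have hGm : Measurable fun x => measEntropy (bKer c3 hc3 x) := by
    rw [show (fun x => measEntropy (bKer c3 hc3 x))
        = fun x => ∑ b, Real.negMulLog ((c3 x b).toReal) from funext hGb]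
    exact Finset.measurable_sum _ fun b _ =>
      Real.continuous_negMulLog.measurable.comp ((hc3 b).ennreal_toReal)
  have habs : ∀ x, |measEntropy (bKer c3 hc3 x)| ≤ 2 := by
    intro x
    rw [hGb x]
    calc |∑ b, Real.negMulLog ((c3 x b).toReal)|
        ≤ ∑ b, |Real.negMulLog ((c3 x b).toReal)| := Finset.abs_sum_le_sum_abs _ _
      _ ≤ ∑ _b : Bool, (1 : ℝ) := Finset.sum_le_sum fun b _ =>
          abs_negMulLog_le_one ENNReal.toReal_nonneg
            (by simpa using ENNReal.toReal_mono ENNReal.one_ne_top (hc3le x b))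
      _ = 2 := by simp
  have hF : Measurable fun p : β × (Fin g → Bool) =>
      measEntropy (bKer c3 hc3 (pri p.2, p.1)) :=
    hGm.comp ((hprim.comp measurable_snd).prodMk measurable_fst)
  have hint : Integrable (fun p : β × (Fin g → Bool) =>
      measEntropy (bKer c3 hc3 (pri p.2, p.1))) ((μ.map Y) ⊗ₘ κ) :=
    integrable_of_bound _ _ hF 2 fun p => habs _
  calc ∫ x, measEntropy (bKer c3 hc3 x) ∂(μ.map W)
      = ∫ ω, measEntropy (bKer c3 hc3 (W ω)) ∂μ :=
        integral_map hW.aemeasurable hGm.aestronglyMeasurable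
    _ = ∫ p : β × (Fin g → Bool), measEntropy (bKer c3 hc3 (pri p.2, p.1))
          ∂(μ.map (fun ω => (Y ω, (fun i' => C i' ω : Fin g → Bool)))) := by
        rw [integral_map (hY.prodMk hVm).aemeasurable hF.aestronglyMeasurable]
    _ = ∫ y, ∫ v, measEntropy (bKer c3 hc3 (pri v, y)) ∂κ y ∂(μ.map Y) := by
        rw [hbase, Measure.integral_compProd hint]
    _ = ∫ y, scH (fun v => (κ y {v}).toReal) pri (fun v => v i) ∂(μ.map Y) := by
        refine integral_congr_ae (ae_of_all _ fun y => ?_)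
        show ∫ v, measEntropy (bKer c3 hc3 (pri v, y)) ∂κ y
            = scH (fun v => (κ y {v}).toReal) pri (fun v => v i)
        rw [integral_fintype Integrable.of_finite]
        simp only [Measure.real]
        have hptr : ∀ v : Fin g → Bool,
            (κ y {v}).toReal • measEntropy (bKer c3 hc3 (pri v, y))
              = (κ y {v}).toReal * (∑ b, Real.negMulLog ((c3 (pri v, y) b).toReal)) := by
          intro v
          rw [smul_eq_mul, hGb]
        rw [Finset.sum_congr rfl fun v _ => hptr v,
          ← spush_mul_sum (fun v => (κ y {v}).toReal) pri
            (fun t => ∑ b, Real.negMulLog ((c3 (t, y) b).toReal))]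
        unfold scH
        refine Finset.sum_congr rfl fun t _ => ?_
        rw [Finset.mul_sum]
        refine Finset.sum_congr rfl fun b _ => ?_
        congr 2
        rw [hc3def]
        simp only
        rw [ENNReal.toReal_div]
        congr 1
        · exact measure_preimage2_toReal_eq_spush (κ y) pri (fun v => v i) t b
        · exact measure_preimage_toReal_eq_spush (κ y) pri t

end Bridge3

/-- For mutually independent bits `C₁,…,C_g` and channel output `Y`
with values in a standard Borel space, the information loss from marginalizing group
probabilities to bit probabilities satisfies
`I_g − I_b = (1/g)·Σ_{i≥2} I(Cᵢ ; (C₁,…,C_{i−1}) | Y) ≥ 0`, where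
`I_g := (1/g)·I(C₁,…,C_g ; Y)` and `I_b := (1/g)·Σᵢ I(Cᵢ ; Y)`. -/
theorem stmt_4 {Ω : Type*} [MeasurableSpace Ω] (μ : Measure Ω) [IsProbabilityMeasure μ]
    {β : Type*} [MeasurableSpace β] [StandardBorelSpace β]
    (g : ℕ)
    (C : Fin g → Ω → Bool) (hC : ∀ i, Measurable (C i))
    (hindep : iIndepFun C μ)
    (Y : Ω → β) (hY : Measurable Y) :
    (1 / (g:ℝ)) * mutualInfoRV μ (fun ω (i : Fin g) => C i ω) Y
        - (1 / (g:ℝ)) * ∑ i : Fin g, mutualInfoRV μ (C i) Y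
      = (1 / (g:ℝ)) * ∑ i ∈ Finset.univ.filter (fun i : Fin g => 0 < (i:ℕ)),
          condMutualInfoRV μ (C i)
            (fun ω (j : Fin (i:ℕ)) => C (Fin.castLE i.isLt.le j) ω) Y ∧
    0 ≤ (1 / (g:ℝ)) * mutualInfoRV μ (fun ω (i : Fin g) => C i ω) Y
        - (1 / (g:ℝ)) * ∑ i : Fin g, mutualInfoRV μ (C i) Y := by
  classical
  rcases Nat.eq_zero_or_pos g with hg0 | hgpos
  · subst hg0
    simp
  have hVm : Measurable (fun ω => (fun i => C i ω : Fin g → Bool)) :=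
    measurable_pi_lambda _ fun i => hC i
  haveI : IsProbabilityMeasure (μ.map Y) := Measure.isProbabilityMeasure_map hY.aemeasurable
  haveI : IsProbabilityMeasure (μ.map (fun ω (i : Fin g) => C i ω)) :=
    Measure.isProbabilityMeasure_map hVm.aemeasurable
  set κ : Kernel β (Fin g → Bool) := condDistrib (fun ω (i : Fin g) => C i ω) Y μ
    with hκdef
  haveI : IsMarkovKernel κ := by rw [hκdef]; infer_instance
  have hbase : μ.map (fun ω => (Y ω, (fun i => C i ω : Fin g → Bool)))
      = (μ.map Y) ⊗ₘ κ := by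
    haveI : IsProbabilityMeasure
        (μ.map (fun ω => (Y ω, (fun i => C i ω : Fin g → Bool)))) :=
      Measure.isProbabilityMeasure_map (hY.prodMk hVm).aemeasurable
    rw [hκdef, condDistrib_def]
    conv_lhs => rw [← (μ.map (fun ω => (Y ω, (fun i => C i ω : Fin g → Bool)))).disintegrate (μ.map (fun ω => (Y ω, (fun i => C i ω : Fin g → Bool)))).condKernel]
    rw [Measure.fst_map_prodMk hVm]
  set P : β → (Fin g → Bool) → ℝ := fun y v => (κ y {v}).toReal with hPdef
  set PV : (Fin g → Bool) → ℝ :=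
    fun v => ((μ.map (fun ω (i : Fin g) => C i ω)) {v}).toReal with hPVdef
  have hPnn : ∀ y v, 0 ≤ P y v := fun y v => ENNReal.toReal_nonneg
  have hPtot : ∀ y, ∑ v, P y v = 1 := by
    intro y
    have : ∑ v, P y v = ((κ y) Set.univ).toReal := sum_measure_toReal_univ (κ y)
    rw [this, measure_univ, ENNReal.toReal_one]
  have hPVnn : ∀ v, 0 ≤ PV v := fun v => ENNReal.toReal_nonneg
  have hPVtot : ∑ v, PV v = 1 := by
    have : ∑ v, PV v = ((μ.map (fun ω (i : Fin g) => C i ω)) Set.univ).toReal :=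
      sum_measure_toReal_univ _
    rw [this, measure_univ, ENNReal.toReal_one]
  have hPm : ∀ v, Measurable fun y => P y v := fun v =>
    (Kernel.measurable_coe κ (measurableSet_singleton v)).ennreal_toReal
  have hspm : ∀ {T' : Type} (f : (Fin g → Bool) → T') (t : T'),
      Measurable fun y => spush (P y) f t := by
    intro T' f t
    unfold spush
    refine Finset.measurable_sum _ fun v _ => ?_
    by_cases h : f v = t
    · simpa only [if_pos h] using hPm v
    · simpa only [if_neg h] using measurable_const
  -- integrability
  have hintH : Integrable (fun y => sH (P y)) (μ.map Y) := by
    refine integrable_of_bound _ _ ?_ (Fintype.card (Fin g → Bool) : ℝ) ?_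
    · unfold sH
      exact Finset.measurable_sum _ fun v _ =>
        Real.continuous_negMulLog.measurable.comp (hPm v)
    · intro y
      refine abs_sH_le (fun v => hPnn y v) (fun v => ?_)
      calc P y v ≤ ∑ v', P y v' :=
            Finset.single_le_sum (fun v' _ => hPnn y v') (Finset.mem_univ v)
        _ = 1 := hPtot y
  have hintHb : ∀ i : Fin g,
      Integrable (fun y => sH (spush (P y) (fun v => v i))) (μ.map Y) := by
    intro i
    refine integrable_of_bound _ _ ?_ (Fintype.card Bool : ℝ) ?_
    · unfold sH
      exact Finset.measurable_sum _ fun b _ =>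
        Real.continuous_negMulLog.measurable.comp (hspm _ b)
    · intro y
      refine abs_sH_le (fun b => spush_nonneg (hPnn y) _ b) (fun b => ?_)
      calc spush (P y) (fun v => v i) b ≤ ∑ v, P y v := spush_le_sum (hPnn y) _ b
        _ = 1 := hPtot y
  have hintcH : ∀ i : Fin g, Integrable
      (fun y => scH (P y) (fun v (j : Fin (i:ℕ)) => v (Fin.castLE i.isLt.le j))
        (fun v => v i)) (μ.map Y) := by
    intro i
    refine integrable_of_bound _ _ ?_
      ((Fintype.card (Fin (i:ℕ) → Bool) : ℝ) * (Fintype.card Bool : ℝ)) ?_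
    · unfold scH
      refine Finset.measurable_sum _ fun t _ => ?_
      refine Finset.measurable_sum _ fun b _ => ?_
      exact (hspm _ t).mul (Real.continuous_negMulLog.measurable.comp
        ((hspm _ (t, b)).div (hspm _ t)))
    · intro y
      exact abs_scH_le (hPnn y) (hPtot y) _ _
  -- M1
  have hM1 : condEntropyRV μ (fun ω (i : Fin g) => C i ω) Y
      = ∫ y, sH (P y) ∂(μ.map Y) := by
    unfold condEntropyRV
    refine integral_congr_ae (ae_of_all _ fun y => ?_)
    show measEntropy (condDistrib (fun ω (i : Fin g) => C i ω) Y μ y) = sH (P y)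
    rw [measEntropy_eq_sH]
  -- M2 and M3
  have hM2 : ∀ i : Fin g, condEntropyRV μ (C i) Y
      = ∫ y, sH (spush (P y) (fun v => v i)) ∂(μ.map Y) := fun i =>
    aux_M2 μ C Y κ hC hY hbase i
  have hM3 : ∀ i : Fin g, condEntropyRV μ (C i)
        (fun ω => ((fun j : Fin (i:ℕ) => C (Fin.castLE i.isLt.le j) ω), Y ω))
      = ∫ y, scH (P y) (fun v (j : Fin (i:ℕ)) => v (Fin.castLE i.isLt.le j))
          (fun v => v i) ∂(μ.map Y) := fun i =>
    aux_M3 μ C Y κ hC hY hbase i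
  -- entropy identities
  have hEV : entropyRV μ (fun ω (i : Fin g) => C i ω) = sH PV := measEntropy_eq_sH _
  have hEb : ∀ i : Fin g, entropyRV μ (C i) = sH (spush PV (fun v => v i)) := by
    intro i
    have h1 : ∀ b, ((μ.map (C i)) {b}).toReal = spush PV (fun v => v i) b := by
      intro b
      have h2 : (μ.map (C i)) {b}
          = (μ.map (fun ω (i' : Fin g) => C i' ω))
              ((fun v : Fin g → Bool => v i) ⁻¹' {b}) := by
        rw [Measure.map_apply (hC i) (measurableSet_singleton b),
          Measure.map_apply hVm ((Set.toFinite _).measurableSet)]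
        rfl
      rw [h2]
      exact measure_preimage_toReal_eq_spush _ _ b
    calc entropyRV μ (C i) = sH (fun b => ((μ.map (C i)) {b}).toReal) :=
          measEntropy_eq_sH _
      _ = sH (spush PV (fun v => v i)) := by
          unfold sH
          refine Finset.sum_congr rfl fun b _ => ?_
          show Real.negMulLog (((μ.map (C i)) {b}).toReal) = _
          rw [h1 b]
  -- independence: factorization of PV
  have hfact : ∀ i : Fin g, ∀ t : Fin (i:ℕ) → Bool, ∀ b : Bool,
      spush PV (fun v => ((fun j : Fin (i:ℕ) => v (Fin.castLE i.isLt.le j)), v i)) (t, b)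
        = spush PV (fun v (j : Fin (i:ℕ)) => v (Fin.castLE i.isLt.le j)) t
          * spush PV (fun v => v i) b := by
    intro i t b
    have e1 : spush PV (fun v => ((fun j : Fin (i:ℕ) => v (Fin.castLE i.isLt.le j)), v i)) (t, b)
        = ((μ.map (fun ω (i' : Fin g) => C i' ω))
            ((fun v (j : Fin (i:ℕ)) => v (Fin.castLE i.isLt.le j)) ⁻¹' {t}
              ∩ (fun v : Fin g → Bool => v i) ⁻¹' {b})).toReal :=
      (measure_preimage2_toReal_eq_spush _ _ _ t b).symm
    have e2 : spush PV (fun v (j : Fin (i:ℕ)) => v (Fin.castLE i.isLt.le j)) t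
        = ((μ.map (fun ω (i' : Fin g) => C i' ω))
            ((fun v (j : Fin (i:ℕ)) => v (Fin.castLE i.isLt.le j)) ⁻¹' {t})).toReal :=
      (measure_preimage_toReal_eq_spush _ _ t).symm
    have e3 : spush PV (fun v : Fin g → Bool => v i) b
        = ((μ.map (fun ω (i' : Fin g) => C i' ω))
            ((fun v : Fin g → Bool => v i) ⁻¹' {b})).toReal :=
      (measure_preimage_toReal_eq_spush _ _ b).symm
    rw [e1, e2, e3,
      Measure.map_apply hVm ((Set.toFinite _).measurableSet),
      Measure.map_apply hVm ((Set.toFinite _).measurableSet),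
      Measure.map_apply hVm ((Set.toFinite _).measurableSet),
      ← ENNReal.toReal_mul]
    congr 1
    have hs1 : (fun ω => (fun i' => C i' ω : Fin g → Bool)) ⁻¹'
        ((fun v (j : Fin (i:ℕ)) => v (Fin.castLE i.isLt.le j)) ⁻¹' {t}
          ∩ (fun v : Fin g → Bool => v i) ⁻¹' {b})
        = {ω | (∀ j : Fin (i:ℕ), C (Fin.castLE i.isLt.le j) ω = t j) ∧ C i ω = b} := by
      ext ω
      simp only [Set.mem_preimage, Set.mem_inter_iff, Set.mem_singleton_iff,
        Set.mem_setOf_eq, funext_iff]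
    have hs2 : (fun ω => (fun i' => C i' ω : Fin g → Bool)) ⁻¹'
        ((fun v (j : Fin (i:ℕ)) => v (Fin.castLE i.isLt.le j)) ⁻¹' {t})
        = {ω | ∀ j : Fin (i:ℕ), C (Fin.castLE i.isLt.le j) ω = t j} := by
      ext ω
      simp only [Set.mem_preimage, Set.mem_singleton_iff, Set.mem_setOf_eq, funext_iff]
    have hs3 : (fun ω => (fun i' => C i' ω : Fin g → Bool)) ⁻¹'
        ((fun v : Fin g → Bool => v i) ⁻¹' {b}) = {ω | C i ω = b} := rfl
    rw [hs1, hs2, hs3]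
    exact aux_indep μ C hindep i t b
  -- chain rules
  have hchainP : ∀ y, sH (P y) = ∑ i : Fin g,
      scH (P y) (fun v (j : Fin (i:ℕ)) => v (Fin.castLE i.isLt.le j)) (fun v => v i) :=
    fun y => sH_chain (P y) (hPnn y) (hPtot y)
  have hHVsum : sH PV = ∑ i : Fin g, sH (spush PV (fun v => v i)) := by
    rw [sH_chain PV hPVnn hPVtot]
    exact Finset.sum_congr rfl fun i _ => scH_of_mul (hfact i) hPVtot
  have hAeq : ∫ y, sH (P y) ∂(μ.map Y)
      = ∑ i : Fin g, ∫ y, scH (P y)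
          (fun v (j : Fin (i:ℕ)) => v (Fin.castLE i.isLt.le j)) (fun v => v i)
          ∂(μ.map Y) := by
    calc ∫ y, sH (P y) ∂(μ.map Y)
        = ∫ y, ∑ i : Fin g, scH (P y)
            (fun v (j : Fin (i:ℕ)) => v (Fin.castLE i.isLt.le j)) (fun v => v i)
            ∂(μ.map Y) := integral_congr_ae (ae_of_all _ fun y => hchainP y)
      _ = ∑ i : Fin g, ∫ y, scH (P y)
            (fun v (j : Fin (i:ℕ)) => v (Fin.castLE i.isLt.le j)) (fun v => v i)
            ∂(μ.map Y) := integral_finset_sum Finset.univ fun i _ => hintcH i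
  -- rewriting the three goal quantities
  have hmut1 : mutualInfoRV μ (fun ω (i : Fin g) => C i ω) Y
      = sH PV - ∫ y, sH (P y) ∂(μ.map Y) := by
    unfold mutualInfoRV
    rw [hEV, hM1]
  have hmut2 : ∀ i : Fin g, mutualInfoRV μ (C i) Y
      = sH (spush PV (fun v => v i))
        - ∫ y, sH (spush (P y) (fun v => v i)) ∂(μ.map Y) := by
    intro i
    unfold mutualInfoRV
    rw [hEb i, hM2 i]
  have hcmi : ∀ i : Fin g, condMutualInfoRV μ (C i)
        (fun ω (j : Fin (i:ℕ)) => C (Fin.castLE i.isLt.le j) ω) Y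
      = (∫ y, sH (spush (P y) (fun v => v i)) ∂(μ.map Y))
        - ∫ y, scH (P y) (fun v (j : Fin (i:ℕ)) => v (Fin.castLE i.isLt.le j))
            (fun v => v i) ∂(μ.map Y) := by
    intro i
    unfold condMutualInfoRV
    rw [hM2 i]
    congr 1
    exact hM3 i
  -- the i = 0 term vanishes
  have hzero : (∫ y, sH (spush (P y) (fun v => v (⟨0, hgpos⟩ : Fin g))) ∂(μ.map Y))
      - ∫ y, scH (P y)
          (fun v (j : Fin ((⟨0, hgpos⟩ : Fin g) : ℕ)) =>
            v (Fin.castLE (⟨0, hgpos⟩ : Fin g).isLt.le j))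
          (fun v => v (⟨0, hgpos⟩ : Fin g)) ∂(μ.map Y) = 0 := by
    rw [sub_eq_zero]
    refine (integral_congr_ae (ae_of_all _ fun y => ?_)).symm
    haveI : IsEmpty (Fin ((⟨0, hgpos⟩ : Fin g) : ℕ)) :=
      ⟨fun j => Nat.not_lt_zero _ j.isLt⟩
    exact scH_subsingleton _ _ (hPtot y)
  have hsplit : ∑ i ∈ Finset.univ.filter (fun i : Fin g => 0 < (i:ℕ)),
      ((∫ y, sH (spush (P y) (fun v => v i)) ∂(μ.map Y))
        - ∫ y, scH (P y) (fun v (j : Fin (i:ℕ)) => v (Fin.castLE i.isLt.le j))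
            (fun v => v i) ∂(μ.map Y))
      = ∑ i : Fin g, ((∫ y, sH (spush (P y) (fun v => v i)) ∂(μ.map Y))
        - ∫ y, scH (P y) (fun v (j : Fin (i:ℕ)) => v (Fin.castLE i.isLt.le j))
            (fun v => v i) ∂(μ.map Y)) := by
    have hcompl : Finset.univ.filter (fun i : Fin g => ¬ 0 < (i:ℕ))
        = {(⟨0, hgpos⟩ : Fin g)} := by
      ext j
      simp [Nat.not_lt, Nat.le_zero, Fin.ext_iff]
    symm
    calc ∑ i : Fin g, ((∫ y, sH (spush (P y) (fun v => v i)) ∂(μ.map Y))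
          - ∫ y, scH (P y) (fun v (j : Fin (i:ℕ)) => v (Fin.castLE i.isLt.le j))
              (fun v => v i) ∂(μ.map Y))
        = (∑ i ∈ Finset.univ.filter (fun i : Fin g => 0 < (i:ℕ)),
            ((∫ y, sH (spush (P y) (fun v => v i)) ∂(μ.map Y))
              - ∫ y, scH (P y) (fun v (j : Fin (i:ℕ)) => v (Fin.castLE i.isLt.le j))
                  (fun v => v i) ∂(μ.map Y)))
          + ∑ i ∈ Finset.univ.filter (fun i : Fin g => ¬ 0 < (i:ℕ)),
            ((∫ y, sH (spush (P y) (fun v => v i)) ∂(μ.map Y))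
              - ∫ y, scH (P y) (fun v (j : Fin (i:ℕ)) => v (Fin.castLE i.isLt.le j))
                  (fun v => v i) ∂(μ.map Y)) :=
        (Finset.sum_filter_add_sum_filter_not _ _ _).symm
      _ = _ := by
        rw [hcompl, Finset.sum_singleton, hzero, add_zero]
  have hkey : (1 / (g:ℝ)) * mutualInfoRV μ (fun ω (i : Fin g) => C i ω) Y
      - (1 / (g:ℝ)) * ∑ i : Fin g, mutualInfoRV μ (C i) Y
      = (1 / (g:ℝ)) * ∑ i ∈ Finset.univ.filter (fun i : Fin g => 0 < (i:ℕ)),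
          condMutualInfoRV μ (C i)
            (fun ω (j : Fin (i:ℕ)) => C (Fin.castLE i.isLt.le j) ω) Y := by
    rw [hmut1,
      show (∑ i : Fin g, mutualInfoRV μ (C i) Y)
        = ∑ i : Fin g, (sH (spush PV (fun v => v i))
            - ∫ y, sH (spush (P y) (fun v => v i)) ∂(μ.map Y)) from
        Finset.sum_congr rfl fun i _ => hmut2 i,
      show (∑ i ∈ Finset.univ.filter (fun i : Fin g => 0 < (i:ℕ)),
          condMutualInfoRV μ (C i)
            (fun ω (j : Fin (i:ℕ)) => C (Fin.castLE i.isLt.le j) ω) Y)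
        = ∑ i ∈ Finset.univ.filter (fun i : Fin g => 0 < (i:ℕ)),
            ((∫ y, sH (spush (P y) (fun v => v i)) ∂(μ.map Y))
              - ∫ y, scH (P y) (fun v (j : Fin (i:ℕ)) => v (Fin.castLE i.isLt.le j))
                  (fun v => v i) ∂(μ.map Y)) from
        Finset.sum_congr rfl fun i _ => hcmi i,
      hsplit, hHVsum, hAeq, Finset.sum_sub_distrib, Finset.sum_sub_distrib]
    ring
  refine ⟨hkey, ?_⟩
  rw [hkey]
  refine mul_nonneg (by positivity) (Finset.sum_nonneg fun i _ => ?_)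
  rw [hcmi i]
  refine sub_nonneg.mpr ?_
  refine integral_mono (hintcH i) (hintHb i) fun y => ?_
  exact scH_le (hPnn y) (hPtot y) _ _
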